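/- For every FU k and every fixed opponent power vector p_{-k} with nonnegative entries, the function p_k ↦ u_k(p_k, p_{-k}) is strictly quasiconcave on [0, p_k^max]: for all x, y ∈ [0, p_k^max] with x ≠ y and all t ∈ (0,1), u_k(t·x + (1−t)·y, p_{-k}) > min(u_k(x, p_{-k}), u_k(y, p_{-k})). (Part of Lemma 1.) -/

import Mathlib

open Real Finset

noncomputable def uu (W pa a c q : ℝ) : ℝ := W * Real.log (1 + a*q) / (q+pa) - c*q
noncomputable def ps (W pa a c q : ℝ) : ℝ :=
  W*a*(q+pa)/(1+a*q) - W*Real.log (1+a*q) - c*(q+pa)^2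

lemma hasDerivAt_uu (W pa a c q : ℝ) (h1 : 0 < 1+a*q) (h2 : 0 < q+pa) :
    HasDerivAt (uu W pa a c) (ps W pa a c q / (q+pa)^2) q := by
  have hlin : HasDerivAt (fun q : ℝ => 1+a*q) a q := by
    simpa using ((hasDerivAt_id q).const_mul a).const_add 1
  have hlog := (hlin.log h1.ne').const_mul W
  have hden : HasDerivAt (fun q : ℝ => q+pa) 1 q := (hasDerivAt_id q).add_const pa
  have h := (hlog.div hden h2.ne').sub ((hasDerivAt_id q).const_mul c)
  refine HasDerivAt.congr_deriv h ?_
  unfold ps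
  field_simp

lemma hasDerivAt_ps (W pa a c q : ℝ) (h1 : 0 < 1+a*q) :
    HasDerivAt (ps W pa a c) (-(W*a^2*(q+pa))/(1+a*q)^2 - 2*c*(q+pa)) q := by
  have hlin : HasDerivAt (fun q : ℝ => 1+a*q) a q := by
    simpa using ((hasDerivAt_id q).const_mul a).const_add 1
  have hden : HasDerivAt (fun q : ℝ => q+pa) 1 q := (hasDerivAt_id q).add_const pa
  have ht1 := (hden.const_mul (W*a)).div hlin h1.ne'
  have ht2 := (hlin.log h1.ne').const_mul W
  have ht3 := (hden.pow 2).const_mul c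
  have h := (ht1.sub ht2).sub ht3
  refine HasDerivAt.congr_deriv h ?_
  field_simp
  ring

lemma quasiconcave_aux (W pa a c : ℝ) (hW : 0 < W) (hpa : 0 < pa) (ha : 0 < a) (hc : 0 ≤ c)
    (x y : ℝ) (hx : 0 ≤ x) (hxy : x < y) (t : ℝ) (ht : t ∈ Set.Ioo (0:ℝ) 1) :
    min (uu W pa a c x) (uu W pa a c y) < uu W pa a c (t*x+(1-t)*y) := by
  obtain ⟨ht0, ht1⟩ := ht
  set z := t*x+(1-t)*y with hzdef
  have hz1 : x < z := by nlinarith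
  have hz2 : z < y := by nlinarith
  have hz0 : 0 ≤ z := le_of_lt (lt_of_le_of_lt hx hz1)
  have hpos : ∀ q : ℝ, 0 ≤ q → 0 < 1+a*q := fun q hq => by nlinarith
  have hpos2 : ∀ q : ℝ, 0 ≤ q → 0 < q+pa := fun q hq => by linarith
  -- ψ is strictly decreasing on [0, ∞)
  have hSA : StrictAntiOn (ps W pa a c) (Set.Ici 0) := by
    apply strictAntiOn_of_deriv_neg (convex_Ici 0)
    · exact fun q hq => (hasDerivAt_ps W pa a c q (hpos q hq)).continuousAt.continuousWithinAt
    · intro q hq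
      rw [interior_Ici] at hq
      have h0q : (0:ℝ) < q := hq
      rw [(hasDerivAt_ps W pa a c q (hpos q h0q.le)).deriv]
      have hA := hpos q h0q.le
      have hB := hpos2 q h0q.le
      have h1 : 0 < (W*a^2*(q+pa))/(1+a*q)^2 :=
        div_pos (mul_pos (by positivity) hB) (pow_pos hA 2)
      have h2 : 0 ≤ 2*c*(q+pa) := mul_nonneg (by linarith) hB.le
      rw [neg_div]
      linarith [h1, h2]
  by_cases hψ : 0 ≤ ps W pa a c z
  · -- u strictly increasing on [x, z]
    have hmono : StrictMonoOn (uu W pa a c) (Set.Icc x z) := by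
      apply strictMonoOn_of_deriv_pos (convex_Icc x z)
      · intro q hq
        exact (hasDerivAt_uu W pa a c q (hpos q (hx.trans hq.1)) (hpos2 q (hx.trans hq.1))).continuousAt.continuousWithinAt
      · intro q hq
        rw [interior_Icc] at hq
        have hq0 : 0 ≤ q := hx.trans hq.1.le
        rw [(hasDerivAt_uu W pa a c q (hpos q hq0) (hpos2 q hq0)).deriv]
        have : ps W pa a c z < ps W pa a c q := hSA (Set.mem_Ici.2 hq0) (Set.mem_Ici.2 hz0) hq.2
        exact div_pos (lt_of_le_of_lt hψ this) (by positivity)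
    have := hmono (Set.mem_Icc.2 ⟨le_refl x, hz1.le⟩) (Set.mem_Icc.2 ⟨hz1.le, le_refl z⟩) hz1
    exact lt_of_le_of_lt (min_le_left _ _) this
  · push_neg at hψ
    have hanti : StrictAntiOn (uu W pa a c) (Set.Icc z y) := by
      apply strictAntiOn_of_deriv_neg (convex_Icc z y)
      · intro q hq
        exact (hasDerivAt_uu W pa a c q (hpos q (hz0.trans hq.1)) (hpos2 q (hz0.trans hq.1))).continuousAt.continuousWithinAt
      · intro q hq
        rw [interior_Icc] at hq
        have hq0 : 0 ≤ q := hz0.trans hq.1.le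
        rw [(hasDerivAt_uu W pa a c q (hpos q hq0) (hpos2 q hq0)).deriv]
        have : ps W pa a c q < ps W pa a c z := hSA (Set.mem_Ici.2 hz0) (Set.mem_Ici.2 hq0) hq.1
        exact div_neg_of_neg_of_pos (this.trans hψ) (by positivity)
    have := hanti (Set.mem_Icc.2 ⟨le_refl z, hz2.le⟩) (Set.mem_Icc.2 ⟨hz2.le, le_refl y⟩) hz2
    exact lt_of_le_of_lt (min_le_right _ _) this


/-- SINR of FU `k`. -/
noncomputable def sinr {K : ℕ} (hff : Fin K → Fin K → ℝ) (h0f N : Fin K → ℝ)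
    (p0 : ℝ) (k : Fin K) (p : Fin K → ℝ) : ℝ :=
  hff k k * p k / (N k + h0f k * p0 + ∑ j ∈ Finset.univ.erase k, hff j k * p j)

/-- Net payoff of FU `k`. -/
noncomputable def payoff {K : ℕ} (W pa p0 : ℝ) (hff : Fin K → Fin K → ℝ)
    (h0f hf0 N lam : Fin K → ℝ) (k : Fin K) (p : Fin K → ℝ) : ℝ :=
  W * Real.log (1 + sinr hff h0f N p0 k p) / (p k + pa) - lam k * hf0 k * p k

/-- Lemma 1 (part): `p_k ↦ u_k(p_k, p_{-k})` is strictly quasiconcave on `[0, p_k^max]`. -/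
theorem payoff_strictQuasiconcave {K : ℕ} (hK : 1 ≤ K)
    (W pa p0 : ℝ) (hW : 0 < W) (hpa : 0 < pa) (hp0 : 0 ≤ p0)
    (hff : Fin K → Fin K → ℝ) (h0f hf0 N lam pmax : Fin K → ℝ)
    (hhff : ∀ i j, 0 < hff i j) (hh0f : ∀ i, 0 < h0f i) (hhf0 : ∀ i, 0 < hf0 i)
    (hN : ∀ i, 0 < N i) (hlam : ∀ i, 0 ≤ lam i) (hpmax : ∀ i, 0 < pmax i)
    (k : Fin K) (p : Fin K → ℝ) (hp : ∀ i, i ≠ k → 0 ≤ p i)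
    (x y : ℝ) (hx : x ∈ Set.Icc (0:ℝ) (pmax k)) (hy : y ∈ Set.Icc (0:ℝ) (pmax k))
    (hxy : x ≠ y) (t : ℝ) (ht : t ∈ Set.Ioo (0:ℝ) 1) :
    min (payoff W pa p0 hff h0f hf0 N lam k (Function.update p k x))
        (payoff W pa p0 hff h0f hf0 N lam k (Function.update p k y)) <
      payoff W pa p0 hff h0f hf0 N lam k (Function.update p k (t * x + (1 - t) * y)) := by
  set b : ℝ := N k + h0f k * p0 + ∑ j ∈ Finset.univ.erase k, hff j k * p j with hbdef
  have hb : 0 < b := by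
    have hs : 0 ≤ ∑ j ∈ Finset.univ.erase k, hff j k * p j :=
      Finset.sum_nonneg fun j hj =>
        mul_nonneg (hhff j k).le (hp j (Finset.mem_erase.1 hj).1)
    have := hN k
    nlinarith [mul_nonneg (hh0f k).le hp0]
  have key : ∀ q : ℝ, payoff W pa p0 hff h0f hf0 N lam k (Function.update p k q)
      = uu W pa (hff k k / b) (lam k * hf0 k) q := by
    intro q
    have hsum : ∑ j ∈ Finset.univ.erase k, hff j k * Function.update p k q j
        = ∑ j ∈ Finset.univ.erase k, hff j k * p j :=
      Finset.sum_congr rfl fun j hj => by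
        rw [Function.update_of_ne (Finset.mem_erase.1 hj).1]
    simp only [payoff, sinr, uu, Function.update_self, hsum, ← hbdef]
    rw [show hff k k * q / b = hff k k / b * q by ring]
  rw [key, key, key]
  have ha : 0 < hff k k / b := div_pos (hhff k k) hb
  have hc : 0 ≤ lam k * hf0 k := mul_nonneg (hlam k) (hhf0 k).le
  rcases hxy.lt_or_gt with h | h
  · exact quasiconcave_aux W pa _ _ hW hpa ha hc x y hx.1 h t ht
  · have harg : t * x + (1 - t) * y = (1-t)*y + (1-(1-t))*x := by ring
    rw [harg, min_comm]
    exact quasiconcave_aux W pa _ _ hW hpa ha hc y x hy.1 h (1-t)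
      ⟨by linarith [ht.2], by linarith [ht.1]⟩
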